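/- Let J be a directed partially ordered set in which every element has only finitely many predecessors (for each j ∈ J, the set {i ∈ J : i ≤ j} is finite), and let K be a filtered category. Then for every function g assigning to each element j ∈ J an object g(j) of K, there exist a functor F : J ⥤ K (i.e. an order-preserving assignment of objects and compatible connecting morphisms) and, for every j ∈ J, a morphism g(j) ⟶ F(j) in K. -/

import Mathlib

open CategoryTheory

universe v u w

namespace Stmt11

section Aux

variable {J : Type w} [PartialOrder J] {K : Type u} [Category.{v} K] [IsFiltered K]

/-- rank: number of predecessors (incl. itself) -/
noncomputable def rk (hJ : ∀ j : J, {i : J | i ≤ j}.Finite) (j : J) : ℕ :=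
  (hJ j).toFinset.card

lemma rk_le_rk (hJ : ∀ j : J, {i : J | i ≤ j}.Finite) {i j : J} (h : i ≤ j) :
    rk hJ i ≤ rk hJ j := by
  apply Finset.card_le_card
  rw [Set.Finite.toFinset_subset_toFinset]
  exact fun a ha => le_trans ha h

lemma rk_lt_rk (hJ : ∀ j : J, {i : J | i ≤ j}.Finite) {i j : J} (h : i < j) :
    rk hJ i < rk hJ j := by
  apply Finset.card_lt_card
  rw [Set.Finite.toFinset_ssubset_toFinset]
  constructor
  · exact fun a ha => le_trans ha h.le
  · intro hsub
    have := hsub (show j ∈ {a : J | a ≤ j} from le_refl j)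
    exact absurd (lt_of_le_of_lt this h) (lt_irrefl j)

/-- cocone over a finite family of objects and morphisms indexed by a relation -/
lemma sup_family {ι : Type w} [Fintype ι] (r : ι → ι → Prop) (o : ι → K)
    (f : ∀ i i', r i i' → (o i ⟶ o i')) :
    ∃ (Z : K) (t : ∀ i, o i ⟶ Z), ∀ i i' (hr : r i i'), f i i' hr ≫ t i' = t i := by
  classical
  let O : Finset K := Finset.univ.image o
  have mem : ∀ i : ι, o i ∈ O := fun i => Finset.mem_image_of_mem o (Finset.mem_univ i)
  let H : Finset (Σ' (X Y : K) (_ : X ∈ O) (_ : Y ∈ O), X ⟶ Y) :=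
    Finset.univ.biUnion fun i : ι => Finset.univ.biUnion fun i' : ι =>
      if hr : r i i' then {⟨o i, o i', mem i, mem i', f i i' hr⟩} else ∅
  obtain ⟨S, T, w⟩ := IsFiltered.sup_exists O H
  refine ⟨S, fun i => T (mem i), ?_⟩
  intro i i' hr
  apply w
  refine Finset.mem_biUnion.mpr ⟨i, Finset.mem_univ i,
    Finset.mem_biUnion.mpr ⟨i', Finset.mem_univ i', ?_⟩⟩
  rw [dif_pos hr]
  exact Finset.mem_singleton_self _

variable (hJ : ∀ j : J, {i : J | i ≤ j}.Finite) (g : J → K)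

/-- Partial solutions: functorial data on the elements of rank < n. -/
structure Sol (n : ℕ) where
  o : ∀ j : J, rk hJ j < n → K
  h : ∀ i j (hi : rk hJ i < n) (hj : rk hJ j < n), i ≤ j → (o i hi ⟶ o j hj)
  h_id : ∀ j hj, h j j hj hj le_rfl = 𝟙 _
  h_comp : ∀ i j k hi hj hk (hij : i ≤ j) (hjk : j ≤ k),
    h i j hi hj hij ≫ h j k hj hk hjk = h i k hi hk (hij.trans hjk)
  inc : ∀ j (hj : rk hJ j < n), g j ⟶ o j hj

variable {n : ℕ} (P : Sol hJ g n)

lemma exists_ext (j : J) (hn : ∀ i, i < j → rk hJ i < n) :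
    ∃ (X : K) (t : ∀ i (hi : i < j), P.o i (hn i hi) ⟶ X) (_ : g j ⟶ X),
      ∀ i i' (hi : i < j) (hi' : i' < j) (hle : i ≤ i'),
        P.h i i' (hn i hi) (hn i' hi') hle ≫ t i' hi' = t i hi := by
  have hfin : Finite {i : J // i < j} := by
    have : Finite {i : J // i ≤ j} := (hJ j).to_subtype
    exact Finite.of_injective
      (fun x => (⟨x.1, le_of_lt x.2⟩ : {i : J // i ≤ j}))
      (fun a b hab => by cases a; cases b; simpa using hab)
  have : Fintype {i : J // i < j} := Fintype.ofFinite _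
  obtain ⟨Z, t0, w0⟩ := sup_family (K := K) (fun a b : {i : J // i < j} => a.1 ≤ b.1)
    (fun a => P.o a.1 (hn a.1 a.2)) (fun a b hr => P.h a.1 b.1 _ _ hr)
  refine ⟨IsFiltered.max Z (g j),
    fun i hi => t0 ⟨i, hi⟩ ≫ IsFiltered.leftToMax _ _,
    IsFiltered.rightToMax _ _, ?_⟩
  intro i i' hi hi' hle
  rw [← Category.assoc, w0 ⟨i, hi⟩ ⟨i', hi'⟩ hle]

noncomputable def newX (j : J) (hn : ∀ i, i < j → rk hJ i < n) : K :=
  (exists_ext hJ g P j hn).choose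

noncomputable def newT (j : J) (hn : ∀ i, i < j → rk hJ i < n) :
    ∀ i (hi : i < j), P.o i (hn i hi) ⟶ newX hJ g P j hn :=
  (exists_ext hJ g P j hn).choose_spec.choose

noncomputable def newInc (j : J) (hn : ∀ i, i < j → rk hJ i < n) :
    g j ⟶ newX hJ g P j hn :=
  (exists_ext hJ g P j hn).choose_spec.choose_spec.choose

lemma newT_comm (j : J) (hn : ∀ i, i < j → rk hJ i < n)
    (i i' : J) (hi : i < j) (hi' : i' < j) (hle : i ≤ i') :
    P.h i i' (hn i hi) (hn i' hi') hle ≫ newT hJ g P j hn i' hi' = newT hJ g P j hn i hi :=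
  (exists_ext hJ g P j hn).choose_spec.choose_spec.choose_spec i i' hi hi' hle

lemma hnn {j : J} (hj : rk hJ j < n + 1) : ∀ i, i < j → rk hJ i < n :=
  fun i hi => lt_of_lt_of_le (rk_lt_rk hJ hi) (Nat.lt_succ_iff.mp hj)

lemma eq_of_le_rk {i j : J} (hle : i ≤ j) (h1 : ¬ rk hJ i < n) (hj : rk hJ j < n + 1) :
    i = j := by
  rcases eq_or_lt_of_le hle with h | h
  · exact h
  · exact absurd (lt_of_lt_of_le (rk_lt_rk hJ h) (Nat.lt_succ_iff.mp hj)) h1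

open Classical in
noncomputable def stepO (j : J) (hj : rk hJ j < n + 1) : K :=
  if h : rk hJ j < n then P.o j h else newX hJ g P j (hnn hJ hj)

lemma stepO_pos {j : J} (hj : rk hJ j < n + 1) (h : rk hJ j < n) :
    stepO hJ g P j hj = P.o j h := dif_pos h

lemma stepO_neg {j : J} (hj : rk hJ j < n + 1) (h : ¬ rk hJ j < n) :
    stepO hJ g P j hj = newX hJ g P j (hnn hJ hj) := dif_neg h

open Classical in
noncomputable def stepH (i j : J) (hi : rk hJ i < n + 1) (hj : rk hJ j < n + 1)
    (hle : i ≤ j) : stepO hJ g P i hi ⟶ stepO hJ g P j hj :=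
  if h1 : rk hJ i < n then
    if h2 : rk hJ j < n then
      eqToHom (stepO_pos hJ g P hi h1) ≫ P.h i j h1 h2 hle ≫
        eqToHom (stepO_pos hJ g P hj h2).symm
    else
      eqToHom (stepO_pos hJ g P hi h1) ≫
        newT hJ g P j (hnn hJ hj) i
          (lt_of_le_of_ne hle (fun hij => h2 (hij ▸ h1))) ≫
        eqToHom (stepO_neg hJ g P hj h2).symm
  else
    eqToHom (by cases eq_of_le_rk hJ hle h1 hj; rfl)

lemma stepH_oo {i j : J} (hi : rk hJ i < n + 1) (hj : rk hJ j < n + 1) (hle : i ≤ j)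
    (h1 : rk hJ i < n) (h2 : rk hJ j < n) :
    stepH hJ g P i j hi hj hle =
      eqToHom (stepO_pos hJ g P hi h1) ≫ P.h i j h1 h2 hle ≫
        eqToHom (stepO_pos hJ g P hj h2).symm := by
  rw [stepH, dif_pos h1, dif_pos h2]

lemma stepH_on {i j : J} (hi : rk hJ i < n + 1) (hj : rk hJ j < n + 1) (hle : i ≤ j)
    (h1 : rk hJ i < n) (h2 : ¬ rk hJ j < n) (hlt : i < j) :
    stepH hJ g P i j hi hj hle =
      eqToHom (stepO_pos hJ g P hi h1) ≫ newT hJ g P j (hnn hJ hj) i hlt ≫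
        eqToHom (stepO_neg hJ g P hj h2).symm := by
  rw [stepH, dif_pos h1, dif_neg h2]

lemma stepH_nn {i j : J} (hi : rk hJ i < n + 1) (hj : rk hJ j < n + 1) (hle : i ≤ j)
    (h1 : ¬ rk hJ i < n) :
    stepH hJ g P i j hi hj hle = eqToHom (by cases eq_of_le_rk hJ hle h1 hj; rfl) := by
  rw [stepH, dif_neg h1]

open Classical in
noncomputable def stepInc (j : J) (hj : rk hJ j < n + 1) : g j ⟶ stepO hJ g P j hj :=
  if h : rk hJ j < n then P.inc j h ≫ eqToHom (stepO_pos hJ g P hj h).symm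
  else newInc hJ g P j (hnn hJ hj) ≫ eqToHom (stepO_neg hJ g P hj h).symm

noncomputable def Sol.step : Sol hJ g (n + 1) where
  o := stepO hJ g P
  h := stepH hJ g P
  h_id j hj := by
    by_cases h : rk hJ j < n
    · rw [stepH_oo hJ g P hj hj le_rfl h h, P.h_id]
      simp
    · rw [stepH_nn hJ g P hj hj le_rfl h]
      simp
  h_comp i j k hi hj hk hij hjk := by
    by_cases h1 : rk hJ i < n
    · by_cases h2 : rk hJ j < n
      · by_cases h3 : rk hJ k < n
        · rw [stepH_oo hJ g P hi hj hij h1 h2, stepH_oo hJ g P hj hk hjk h2 h3,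
            stepH_oo hJ g P hi hk (hij.trans hjk) h1 h3]
          simp only [Category.assoc, eqToHom_trans_assoc, eqToHom_refl, Category.id_comp]
          congr 1
          rw [← Category.assoc, P.h_comp]
        · have hjk' : j < k := lt_of_le_of_ne hjk (fun h => h3 (h ▸ h2))
          have hik' : i < k := lt_of_le_of_lt hij hjk'
          rw [stepH_oo hJ g P hi hj hij h1 h2, stepH_on hJ g P hj hk hjk h2 h3 hjk',
            stepH_on hJ g P hi hk (hij.trans hjk) h1 h3 hik']
          simp only [Category.assoc, eqToHom_trans_assoc, eqToHom_refl, Category.id_comp]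
          congr 1
          rw [← Category.assoc, newT_comm hJ g P k (hnn hJ hk) i j hik' hjk' hij]
      · cases eq_of_le_rk hJ hjk h2 hk
        rw [stepH_nn hJ g P hj hj hjk h2]
        simp
    · cases eq_of_le_rk hJ hij h1 hj
      rw [stepH_nn hJ g P hi hi hij h1]
      simp
  inc := stepInc hJ g P

noncomputable def sols : ∀ m : ℕ, Sol hJ g m
  | 0 =>
    { o := fun _ hj => absurd hj (Nat.not_lt_zero _)
      h := fun _ _ hi _ _ => absurd hi (Nat.not_lt_zero _)
      h_id := fun _ hj => absurd hj (Nat.not_lt_zero _)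
      h_comp := fun _ _ _ hi _ _ _ _ => absurd hi (Nat.not_lt_zero _)
      inc := fun _ hj => absurd hj (Nat.not_lt_zero _) }
  | m + 1 => (sols m).step

lemma sols_o_succ (m : ℕ) (j : J) (h1 : rk hJ j < m) (h2 : rk hJ j < m + 1) :
    (sols hJ g (m + 1)).o j h2 = (sols hJ g m).o j h1 :=
  stepO_pos hJ g (sols hJ g m) h2 h1

lemma sols_o_le {m m' : ℕ} (h : m ≤ m') (j : J) (hm : rk hJ j < m) (hm' : rk hJ j < m') :
    (sols hJ g m').o j hm' = (sols hJ g m).o j hm := by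
  induction m', h using Nat.le_induction with
  | base => rfl
  | succ m' hmm ih =>
    have hm'' : rk hJ j < m' := lt_of_lt_of_le hm hmm
    rw [sols_o_succ hJ g m' j hm'', ih hm'']

lemma sols_o (m m' : ℕ) (j : J) (hm : rk hJ j < m) (hm' : rk hJ j < m') :
    (sols hJ g m').o j hm' = (sols hJ g m).o j hm := by
  rcases le_total m m' with h | h
  · exact sols_o_le hJ g h j hm hm'
  · exact (sols_o_le hJ g h j hm' hm).symm

lemma sols_h_succ (m : ℕ) (i j : J) (hi : rk hJ i < m) (hj : rk hJ j < m)
    (hi' : rk hJ i < m + 1) (hj' : rk hJ j < m + 1) (hle : i ≤ j) :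
    (sols hJ g (m + 1)).h i j hi' hj' hle =
      eqToHom (sols_o_succ hJ g m i hi hi') ≫ (sols hJ g m).h i j hi hj hle ≫
        eqToHom (sols_o_succ hJ g m j hj hj').symm :=
  stepH_oo hJ g (sols hJ g m) hi' hj' hle hi hj

lemma sols_h_le {m m' : ℕ} (h : m ≤ m') (i j : J) (hi : rk hJ i < m) (hj : rk hJ j < m)
    (hi' : rk hJ i < m') (hj' : rk hJ j < m') (hle : i ≤ j) :
    (sols hJ g m').h i j hi' hj' hle =
      eqToHom (sols_o hJ g m m' i hi hi') ≫ (sols hJ g m).h i j hi hj hle ≫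
        eqToHom (sols_o hJ g m m' j hj hj').symm := by
  induction m', h using Nat.le_induction with
  | base => simp
  | succ m' hmm ih =>
    have hi'' : rk hJ i < m' := lt_of_lt_of_le hi hmm
    have hj'' : rk hJ j < m' := lt_of_lt_of_le hj hmm
    rw [sols_h_succ hJ g m' i j hi'' hj'', ih hi'' hj'']
    simp

lemma sols_h (m m' : ℕ) (i j : J) (hi : rk hJ i < m) (hj : rk hJ j < m)
    (hi' : rk hJ i < m') (hj' : rk hJ j < m') (hle : i ≤ j) :
    (sols hJ g m').h i j hi' hj' hle =
      eqToHom (sols_o hJ g m m' i hi hi') ≫ (sols hJ g m).h i j hi hj hle ≫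
        eqToHom (sols_o hJ g m m' j hj hj').symm := by
  rcases le_total m m' with h | h
  · exact sols_h_le hJ g h i j hi hj hi' hj' hle
  · rw [sols_h_le hJ g h i j hi' hj' hi hj hle]
    simp

lemma sols_inc (m : ℕ) (j : J) (hj : rk hJ j < m) : Nonempty (g j ⟶ (sols hJ g m).o j hj) :=
  ⟨(sols hJ g m).inc j hj⟩

end Aux

/-- Let `J` be a directed partially ordered set in which every element has only finitely
many predecessors, and let `K` be a filtered category.  Then for every assignment `g` of
an object of `K` to each element of `J`, there exist a functor `F : J ⥤ K` and, for
every `j ∈ J`, a morphism `g j ⟶ F.obj j` in `K`. -/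
theorem exists_functor_of_directed {J : Type w} [PartialOrder J]
    [IsDirected J (· ≤ ·)] (hJ : ∀ j : J, {i : J | i ≤ j}.Finite)
    {K : Type u} [Category.{v} K] [IsFiltered K] (g : J → K) :
    ∃ F : J ⥤ K, ∀ j : J, Nonempty (g j ⟶ F.obj j) := by
  have hlt : ∀ {i j : J}, i ≤ j → rk hJ i < rk hJ j + 1 :=
    fun {i j} h => Nat.lt_succ_of_le (rk_le_rk hJ h)
  refine ⟨{
    obj := fun j => (sols hJ g (rk hJ j + 1)).o j (Nat.lt_succ_self _)
    map := fun {i j} f =>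
      eqToHom (sols_o hJ g (rk hJ j + 1) (rk hJ i + 1) i (hlt (leOfHom f)) (Nat.lt_succ_self _)) ≫
        (sols hJ g (rk hJ j + 1)).h i j (hlt (leOfHom f)) (Nat.lt_succ_self _) (leOfHom f)
    map_id := fun j => by
      simp [(sols hJ g (rk hJ j + 1)).h_id]
    map_comp := fun {i j k} f f' => by
      rw [sols_h hJ g (rk hJ k + 1) (rk hJ j + 1) i j
        (hlt ((leOfHom f).trans (leOfHom f'))) (hlt (leOfHom f'))
        (hlt (leOfHom f)) (Nat.lt_succ_self _) (leOfHom f)]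
      simp only [Category.assoc, eqToHom_trans_assoc, eqToHom_refl, Category.id_comp]
      congr 1
      rw [(sols hJ g (rk hJ k + 1)).h_comp]
  }, fun j => sols_inc hJ g (rk hJ j + 1) j (Nat.lt_succ_self _)⟩

end Stmt11
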